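/- Let k = ℝ or ℂ. There exist β ∈ GL_3(k) and a real number r > 1 such that for every λ ∈ k with |λ| ≥ 2 the homomorphism ρ_λ : F_2 → GL_3(k), defined on a free basis a, b by ρ_λ(a) := diag(λ, λ, λ⁻²) and ρ_λ(b) := β·diag(10^r, 1, 10^{−r})·β⁻¹, is injective (so the subgroup of GL_3(k) generated by ρ_λ(a) and ρ_λ(b) is free of rank 2) and is a quasi-isometric embedding: there exist c, θ > 0 such that ‖ρ_λ(γ)‖ · ‖ρ_λ(γ)⁻¹‖ ≥ c·e^{θ|γ|} for all γ ∈ F_2. Note that ρ_λ(a) has two eigenvalues of equal maximal modulus, so each ρ_λ is a quasi-isometric embedding whose image contains a non-proximal matrix. -/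

import Mathlib

noncomputable section

/-- Euclidean norm on `Fin n → 𝕜`. -/
def eN {𝕜 : Type*} [RCLike 𝕜] {n : ℕ} (v : Fin n → 𝕜) : ℝ :=
  Real.sqrt (∑ i, ‖v i‖ ^ 2)

/-- Operator norm of a square matrix with respect to the Euclidean norm. -/
def opN {𝕜 : Type*} [RCLike 𝕜] {n : ℕ} (A : Matrix (Fin n) (Fin n) 𝕜) : ℝ :=
  sInf {c : ℝ | 0 ≤ c ∧ ∀ v : Fin n → 𝕜, eN (A.mulVec v) ≤ c * eN v}

namespace Stmt17


variable {𝕜 : Type*} [RCLike 𝕜]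

lemma eN_nonneg {n : ℕ} (v : Fin n → 𝕜) : 0 ≤ eN v := Real.sqrt_nonneg _

lemma norm_le_eN {n : ℕ} (v : Fin n → 𝕜) (i : Fin n) : ‖v i‖ ≤ eN v := by
  rw [eN, show ‖v i‖ = Real.sqrt (‖v i‖ ^ 2) by
    rw [Real.sqrt_sq (norm_nonneg _)]]
  exact Real.sqrt_le_sqrt (Finset.single_le_sum (f := fun j => ‖v j‖ ^ 2)
    (fun j _ => by positivity) (Finset.mem_univ i))

lemma eN_le_sum {n : ℕ} (v : Fin n → 𝕜) : eN v ≤ ∑ i, ‖v i‖ := by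
  rw [eN]
  have h1 : ∑ i, ‖v i‖ ^ 2 ≤ (∑ i, ‖v i‖) ^ 2 := by
    apply Finset.sum_sq_le_sq_sum_of_nonneg
    intro i _; exact norm_nonneg _
  calc Real.sqrt (∑ i, ‖v i‖ ^ 2) ≤ Real.sqrt ((∑ i, ‖v i‖)^2) := Real.sqrt_le_sqrt h1
    _ = ∑ i, ‖v i‖ := Real.sqrt_sq (by positivity)

lemma ratio_le_opN {n : ℕ} (A : Matrix (Fin n) (Fin n) 𝕜) (v : Fin n → 𝕜)
    (hv : 0 < eN v) : eN (A.mulVec v) / eN v ≤ opN A := by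
  apply le_csInf
  · refine ⟨∑ i, ∑ j, ‖A i j‖, by positivity, fun w => ?_⟩
    calc eN (A.mulVec w) ≤ ∑ i, ‖A.mulVec w i‖ := eN_le_sum _
      _ ≤ ∑ i, ∑ j, ‖A i j‖ * eN w := by
          apply Finset.sum_le_sum; intro i _
          calc ‖A.mulVec w i‖ = ‖∑ j, A i j * w j‖ := by
                simp [Matrix.mulVec, dotProduct]
            _ ≤ ∑ j, ‖A i j * w j‖ := norm_sum_le _ _
            _ ≤ ∑ j, ‖A i j‖ * eN w := by
                apply Finset.sum_le_sum; intro j _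
                rw [norm_mul]
                exact mul_le_mul_of_nonneg_left (norm_le_eN w j) (norm_nonneg _)
      _ = (∑ i, ∑ j, ‖A i j‖) * eN w := by
          rw [Finset.sum_mul]
          exact Finset.sum_congr rfl fun i _ => (Finset.sum_mul _ _ _).symm
  · rintro c ⟨hc0, hc⟩
    rw [div_le_iff₀ hv]
    exact hc v



variable {𝕜 : Type*} [RCLike 𝕜]

def ga (lam : 𝕜) : Matrix (Fin 3) (Fin 3) 𝕜 := Matrix.diagonal ![lam, lam, (lam^2)⁻¹]
def gA (lam : 𝕜) : Matrix (Fin 3) (Fin 3) 𝕜 := Matrix.diagonal ![lam⁻¹, lam⁻¹, lam^2]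
def gb : Matrix (Fin 3) (Fin 3) 𝕜 :=
  !![10001/200, 0, 9999/200; 0, 1, 0; 9999/200, 0, 10001/200]
def gB : Matrix (Fin 3) (Fin 3) 𝕜 :=
  !![10001/200, 0, -(9999/200); 0, 1, 0; -(9999/200), 0, 10001/200]

def g (lam : 𝕜) : Fin 2 × Bool → Matrix (Fin 3) (Fin 3) 𝕜 := fun x =>
  if x.1 = 0 then (if x.2 then ga lam else gA lam) else (if x.2 then gb else gB)

def cone : Fin 2 × Bool → (Fin 3 → 𝕜) → Prop := fun x v =>
  v 1 = 0 ∧ (if x.1 = 0 then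
    (if x.2 then 2 * ‖v 2‖ ≤ ‖v 0‖ else 2 * ‖v 0‖ ≤ ‖v 2‖)
  else
    (if x.2 then 10 * ‖v 0 - v 2‖ ≤ ‖v 0 + v 2‖ else 10 * ‖v 0 + v 2‖ ≤ ‖v 0 - v 2‖))

def mx (v : Fin 3 → 𝕜) : ℝ := max ‖v 0‖ ‖v 2‖

lemma mx_nonneg (v : Fin 3 → 𝕜) : 0 ≤ mx v := le_trans (norm_nonneg _) (le_max_left _ _)

lemma cone_a (v : Fin 3 → 𝕜) : cone (0, true) v ↔ (v 1 = 0 ∧ 2 * ‖v 2‖ ≤ ‖v 0‖) := by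
  simp [cone]
lemma cone_A (v : Fin 3 → 𝕜) : cone (0, false) v ↔ (v 1 = 0 ∧ 2 * ‖v 0‖ ≤ ‖v 2‖) := by
  simp [cone]
lemma cone_b (v : Fin 3 → 𝕜) :
    cone (1, true) v ↔ (v 1 = 0 ∧ 10 * ‖v 0 - v 2‖ ≤ ‖v 0 + v 2‖) := by
  simp [cone]
lemma cone_B (v : Fin 3 → 𝕜) :
    cone (1, false) v ↔ (v 1 = 0 ∧ 10 * ‖v 0 + v 2‖ ≤ ‖v 0 - v 2‖) := by
  simp [cone]

lemma step_a (lam : 𝕜) (hlam : 2 ≤ ‖lam‖) (v : Fin 3 → 𝕜) (h1 : v 1 = 0)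
    (h9 : 9 * ‖v 2‖ ≤ 11 * ‖v 0‖) :
    cone (0, true) ((ga lam).mulVec v) ∧ (3/2) * mx v ≤ mx ((ga lam).mulVec v) := by
  have e0 : (ga lam).mulVec v 0 = lam * v 0 := by simp [ga, Matrix.mulVec_diagonal]
  have e1 : (ga lam).mulVec v 1 = lam * v 1 := by simp [ga, Matrix.mulVec_diagonal]
  have e2 : (ga lam).mulVec v 2 = (lam^2)⁻¹ * v 2 := by simp [ga, Matrix.mulVec_diagonal]
  have hX : (0:ℝ) ≤ ‖v 0‖ := norm_nonneg _
  have hZ : (0:ℝ) ≤ ‖v 2‖ := norm_nonneg _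
  have hn0 : ‖(ga lam).mulVec v 0‖ = ‖lam‖ * ‖v 0‖ := by rw [e0, norm_mul]
  have hn2 : ‖(ga lam).mulVec v 2‖ = (‖lam‖^2)⁻¹ * ‖v 2‖ := by
    rw [e2, norm_mul, norm_inv, norm_pow]
  have h4 : (4:ℝ) ≤ ‖lam‖^2 := by nlinarith
  have hi4 : (‖lam‖^2)⁻¹ ≤ 4⁻¹ := by
    apply inv_anti₀ (by norm_num) h4
  have hi0 : (0:ℝ) ≤ (‖lam‖^2)⁻¹ := by positivity
  refine ⟨(cone_a _).2 ⟨by rw [e1, h1, mul_zero], ?_⟩, ?_⟩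
  · rw [hn0, hn2]
    have : (‖lam‖^2)⁻¹ * ‖v 2‖ ≤ 4⁻¹ * ‖v 2‖ := mul_le_mul_of_nonneg_right hi4 hZ
    nlinarith
  · have hmv : mx v ≤ (11/9) * ‖v 0‖ := max_le (by linarith) (by linarith)
    have hmw : ‖lam‖ * ‖v 0‖ ≤ mx ((ga lam).mulVec v) := hn0 ▸ le_max_left _ _
    nlinarith [mx_nonneg v]

lemma step_A (lam : 𝕜) (hlam : 2 ≤ ‖lam‖) (v : Fin 3 → 𝕜) (h1 : v 1 = 0)
    (h9 : 9 * ‖v 0‖ ≤ 11 * ‖v 2‖) :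
    cone (0, false) ((gA lam).mulVec v) ∧ (3/2) * mx v ≤ mx ((gA lam).mulVec v) := by
  have e0 : (gA lam).mulVec v 0 = lam⁻¹ * v 0 := by simp [gA, Matrix.mulVec_diagonal]
  have e1 : (gA lam).mulVec v 1 = lam⁻¹ * v 1 := by simp [gA, Matrix.mulVec_diagonal]
  have e2 : (gA lam).mulVec v 2 = lam^2 * v 2 := by simp [gA, Matrix.mulVec_diagonal]
  have hX : (0:ℝ) ≤ ‖v 0‖ := norm_nonneg _
  have hZ : (0:ℝ) ≤ ‖v 2‖ := norm_nonneg _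
  have hn0 : ‖(gA lam).mulVec v 0‖ = ‖lam‖⁻¹ * ‖v 0‖ := by rw [e0, norm_mul, norm_inv]
  have hn2 : ‖(gA lam).mulVec v 2‖ = ‖lam‖^2 * ‖v 2‖ := by rw [e2, norm_mul, norm_pow]
  have h4 : (4:ℝ) ≤ ‖lam‖^2 := by nlinarith
  have hiL : ‖lam‖⁻¹ ≤ 2⁻¹ := by
    apply inv_anti₀ (by norm_num) hlam
  have hi0 : (0:ℝ) ≤ ‖lam‖⁻¹ := by positivity
  refine ⟨(cone_A _).2 ⟨by rw [e1, h1, mul_zero], ?_⟩, ?_⟩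
  · rw [hn0, hn2]
    have : ‖lam‖⁻¹ * ‖v 0‖ ≤ 2⁻¹ * ‖v 0‖ := mul_le_mul_of_nonneg_right hiL hX
    nlinarith
  · have hmv : mx v ≤ (11/9) * ‖v 2‖ := max_le (by linarith) (by linarith)
    have hmw : ‖lam‖^2 * ‖v 2‖ ≤ mx ((gA lam).mulVec v) := hn2 ▸ le_max_right _ _
    nlinarith [mx_nonneg v]

lemma norm_inv_hundred : ‖((1:𝕜)/100)‖ = 1/100 := by
  rw [norm_div, norm_one, RCLike.norm_ofNat]

lemma step_b (v : Fin 3 → 𝕜) (h1 : v 1 = 0)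
    (hu : ‖v 0‖ + ‖v 2‖ ≤ 3 * ‖v 0 + v 2‖) :
    cone (1, true) ((gb (𝕜 := 𝕜)).mulVec v) ∧ (3/2) * mx v ≤ mx (gb.mulVec v) := by
  have e0 : gb.mulVec v 0 = 10001/200 * v 0 + 9999/200 * v 2 := by
    simp [gb, Matrix.mulVec, dotProduct, Fin.sum_univ_three]
  have e1 : gb.mulVec v 1 = v 1 := by
    simp [gb, Matrix.mulVec, dotProduct, Fin.sum_univ_three]
  have e2 : gb.mulVec v 2 = 9999/200 * v 0 + 10001/200 * v 2 := by
    simp [gb, Matrix.mulVec, dotProduct, Fin.sum_univ_three]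
  have hX : (0:ℝ) ≤ ‖v 0‖ := norm_nonneg _
  have hZ : (0:ℝ) ≤ ‖v 2‖ := norm_nonneg _
  have su : gb.mulVec v 0 + gb.mulVec v 2 = (100:𝕜) * (v 0 + v 2) := by
    rw [e0, e2]; ring
  have sw : gb.mulVec v 0 - gb.mulVec v 2 = ((1:𝕜)/100) * (v 0 - v 2) := by
    rw [e0, e2]; ring
  have hU' : ‖gb.mulVec v 0 + gb.mulVec v 2‖ = 100 * ‖v 0 + v 2‖ := by
    rw [su, norm_mul, RCLike.norm_ofNat]
  have hW' : ‖gb.mulVec v 0 - gb.mulVec v 2‖ = (1/100) * ‖v 0 - v 2‖ := by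
    rw [sw, norm_mul, norm_inv_hundred]
  have hWle : ‖v 0 - v 2‖ ≤ ‖v 0‖ + ‖v 2‖ := norm_sub_le _ _
  have hUpos : (0:ℝ) ≤ ‖v 0 + v 2‖ := norm_nonneg _
  refine ⟨(cone_b _).2 ⟨by rw [e1, h1], ?_⟩, ?_⟩
  · rw [hU', hW']; linarith
  · have hsum : 100 * ‖v 0 + v 2‖ ≤ ‖gb.mulVec v 0‖ + ‖gb.mulVec v 2‖ := by
      rw [← hU']; exact norm_add_le _ _
    have hmw1 : ‖gb.mulVec v 0‖ ≤ mx (gb.mulVec v) := le_max_left _ _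
    have hmw2 : ‖gb.mulVec v 2‖ ≤ mx (gb.mulVec v) := le_max_right _ _
    have hmv : mx v ≤ ‖v 0‖ + ‖v 2‖ := max_le (by linarith) (by linarith)
    linarith

lemma step_B (v : Fin 3 → 𝕜) (h1 : v 1 = 0)
    (hw : ‖v 0‖ + ‖v 2‖ ≤ 3 * ‖v 0 - v 2‖) :
    cone (1, false) ((gB (𝕜 := 𝕜)).mulVec v) ∧ (3/2) * mx v ≤ mx (gB.mulVec v) := by
  have e0 : gB.mulVec v 0 = 10001/200 * v 0 - 9999/200 * v 2 := by
    simp [gB, Matrix.mulVec, dotProduct, Fin.sum_univ_three]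
    ring_nf
  have e1 : gB.mulVec v 1 = v 1 := by
    simp [gB, Matrix.mulVec, dotProduct, Fin.sum_univ_three]
  have e2 : gB.mulVec v 2 = -(9999/200) * v 0 + 10001/200 * v 2 := by
    simp [gB, Matrix.mulVec, dotProduct, Fin.sum_univ_three]
  have hX : (0:ℝ) ≤ ‖v 0‖ := norm_nonneg _
  have hZ : (0:ℝ) ≤ ‖v 2‖ := norm_nonneg _
  have su : gB.mulVec v 0 + gB.mulVec v 2 = ((1:𝕜)/100) * (v 0 + v 2) := by
    rw [e0, e2]; ring
  have sw : gB.mulVec v 0 - gB.mulVec v 2 = (100:𝕜) * (v 0 - v 2) := by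
    rw [e0, e2]; ring
  have hU' : ‖gB.mulVec v 0 + gB.mulVec v 2‖ = (1/100) * ‖v 0 + v 2‖ := by
    rw [su, norm_mul, norm_inv_hundred]
  have hW' : ‖gB.mulVec v 0 - gB.mulVec v 2‖ = 100 * ‖v 0 - v 2‖ := by
    rw [sw, norm_mul, RCLike.norm_ofNat]
  have hUle : ‖v 0 + v 2‖ ≤ ‖v 0‖ + ‖v 2‖ := norm_add_le _ _
  have hWpos : (0:ℝ) ≤ ‖v 0 - v 2‖ := norm_nonneg _
  refine ⟨(cone_B _).2 ⟨by rw [e1, h1], ?_⟩, ?_⟩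
  · rw [hU', hW']; linarith
  · have hsum : 100 * ‖v 0 - v 2‖ ≤ ‖gB.mulVec v 0‖ + ‖gB.mulVec v 2‖ := by
      rw [← hW']; exact norm_sub_le _ _
    have hmw1 : ‖gB.mulVec v 0‖ ≤ mx (gB.mulVec v) := le_max_left _ _
    have hmw2 : ‖gB.mulVec v 2‖ ≤ mx (gB.mulVec v) := le_max_right _ _
    have hmv : mx v ≤ ‖v 0‖ + ‖v 2‖ := max_le (by linarith) (by linarith)
    linarith


lemma step (lam : 𝕜) (hlam : 2 ≤ ‖lam‖) (x z : Fin 2 × Bool)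
    (hxz : ¬(x.1 = z.1 ∧ x.2 = !z.2)) (v : Fin 3 → 𝕜) (hv : cone z v) :
    cone x ((g lam x).mulVec v) ∧ (3/2) * mx v ≤ mx ((g lam x).mulVec v) := by
  have hX : (0:ℝ) ≤ ‖v 0‖ := norm_nonneg _
  have hZ : (0:ℝ) ≤ ‖v 2‖ := norm_nonneg _
  have t1 : ‖v 2‖ ≤ ‖v 0‖ + ‖v 0 - v 2‖ := by
    calc ‖v 2‖ = ‖v 0 - (v 0 - v 2)‖ := congrArg norm (by ring)
      _ ≤ ‖v 0‖ + ‖v 0 - v 2‖ := norm_sub_le _ _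
  have t2 : ‖v 0‖ ≤ ‖v 2‖ + ‖v 0 - v 2‖ := by
    calc ‖v 0‖ = ‖v 2 + (v 0 - v 2)‖ := congrArg norm (by ring)
      _ ≤ ‖v 2‖ + ‖v 0 - v 2‖ := norm_add_le _ _
  have t3 : ‖v 2‖ ≤ ‖v 0‖ + ‖v 0 + v 2‖ := by
    calc ‖v 2‖ = ‖(v 0 + v 2) - v 0‖ := congrArg norm (by ring)
      _ ≤ ‖v 0 + v 2‖ + ‖v 0‖ := norm_sub_le _ _
      _ = ‖v 0‖ + ‖v 0 + v 2‖ := by ring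
  have t4 : ‖v 0‖ ≤ ‖v 2‖ + ‖v 0 + v 2‖ := by
    calc ‖v 0‖ = ‖(v 0 + v 2) - v 2‖ := congrArg norm (by ring)
      _ ≤ ‖v 0 + v 2‖ + ‖v 2‖ := norm_sub_le _ _
      _ = ‖v 2‖ + ‖v 0 + v 2‖ := by ring
  have t5 : ‖v 0 - v 2‖ ≤ ‖v 0‖ + ‖v 2‖ := norm_sub_le _ _
  have t6 : ‖v 0 + v 2‖ ≤ ‖v 0‖ + ‖v 2‖ := norm_add_le _ _
  have t7 : 2 * ‖v 0‖ ≤ ‖v 0 + v 2‖ + ‖v 0 - v 2‖ := by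
    calc 2 * ‖v 0‖ = ‖(2:𝕜) * v 0‖ := by rw [norm_mul, RCLike.norm_two]
      _ = ‖(v 0 + v 2) + (v 0 - v 2)‖ := congrArg norm (by ring)
      _ ≤ ‖v 0 + v 2‖ + ‖v 0 - v 2‖ := norm_add_le _ _
  have t8 : 2 * ‖v 2‖ ≤ ‖v 0 + v 2‖ + ‖v 0 - v 2‖ := by
    calc 2 * ‖v 2‖ = ‖(2:𝕜) * v 2‖ := by rw [norm_mul, RCLike.norm_two]
      _ = ‖(v 0 + v 2) - (v 0 - v 2)‖ := congrArg norm (by ring)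
      _ ≤ ‖v 0 + v 2‖ + ‖v 0 - v 2‖ := norm_sub_le _ _
  simp only [cone] at hv
  obtain ⟨h1, h2⟩ := hv
  obtain ⟨i, b⟩ := x; obtain ⟨j, c⟩ := z
  fin_cases i <;> fin_cases j <;> cases b <;> cases c
  · -- A from C_A
    simp at h2
    exact step_A lam hlam v h1 (by linarith)
  · exact absurd ⟨rfl, rfl⟩ hxz
  · exact absurd ⟨rfl, rfl⟩ hxz
  · -- a from C_a
    simp at h2
    exact step_a lam hlam v h1 (by linarith)
  · -- A from C_B
    simp at h2
    exact step_A lam hlam v h1 (by linarith)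
  · -- A from C_b
    simp at h2
    exact step_A lam hlam v h1 (by linarith)
  · -- a from C_B
    simp at h2
    exact step_a lam hlam v h1 (by linarith)
  · -- a from C_b
    simp at h2
    exact step_a lam hlam v h1 (by linarith)
  · -- B from C_A
    simp at h2
    exact step_B v h1 (by linarith)
  · -- B from C_a
    simp at h2
    exact step_B v h1 (by linarith)
  · -- b from C_A
    simp at h2
    exact step_b v h1 (by linarith)
  · -- b from C_a
    simp at h2
    exact step_b v h1 (by linarith)
  · -- B from C_B
    simp at h2
    exact step_B v h1 (by linarith)
  · exact absurd ⟨rfl, rfl⟩ hxz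
  · exact absurd ⟨rfl, rfl⟩ hxz
  · -- b from C_b
    simp at h2
    exact step_b v h1 (by linarith)

/-! ### Reduced words -/

def Rel : (Fin 2 × Bool) → (Fin 2 × Bool) → Prop := fun x y => ¬(x.1 = y.1 ∧ x.2 = !y.2)

lemma chain'_of_reduce : ∀ L : List (Fin 2 × Bool), FreeGroup.reduce L = L → L.Chain' Rel := by
  intro L
  induction L with
  | nil => intro _; exact List.isChain_nil
  | cons x L ih =>
    intro h
    rw [FreeGroup.reduce.cons] at h
    rcases hL : FreeGroup.reduce L with _ | ⟨hd, tl⟩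
    · rw [hL] at h
      injection h with _ h2
      subst h2
      exact List.isChain_singleton _
    · rw [hL] at h
      dsimp only at h
      by_cases hc : x.1 = hd.1 ∧ x.2 = !hd.2
    ; · rw [if_pos hc] at h
        exfalso
        have h1 := FreeGroup.Red.length_le (FreeGroup.reduce.red (L := L))
        rw [hL] at h1
        have h2 := congrArg List.length h
        simp at h1 h2
        omega
      · rw [if_neg hc] at h
        injection h with _ h2
        have hred : FreeGroup.reduce L = L := hL.trans h2
        have hch := ih hred
        rw [← h2]
        exact List.IsChain.cons_cons hc (by rw [h2]; exact hch)

/-! ### Units -/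

lemma lam_ne (lam : 𝕜) (hlam : 2 ≤ ‖lam‖) : lam ≠ 0 := by
  intro h; rw [h, norm_zero] at hlam; linarith

def Aunit (lam : 𝕜) (hlam : 2 ≤ ‖lam‖) : (Matrix (Fin 3) (Fin 3) 𝕜)ˣ where
  val := ga lam
  inv := gA lam
  val_inv := by
    have h := lam_ne lam hlam
    ext i j
    fin_cases i <;> fin_cases j <;>
      simp [ga, gA, Matrix.mul_apply, Fin.sum_univ_three, Matrix.diagonal,
        Matrix.one_apply] <;>
      field_simp
  inv_val := by
    have h := lam_ne lam hlam
    ext i j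
    fin_cases i <;> fin_cases j <;>
      simp [ga, gA, Matrix.mul_apply, Fin.sum_univ_three, Matrix.diagonal,
        Matrix.one_apply] <;>
      field_simp

def Bunit : (Matrix (Fin 3) (Fin 3) 𝕜)ˣ where
  val := gb
  inv := gB
  val_inv := by
    ext i j
    fin_cases i <;> fin_cases j <;>
      simp [gb, gB, Matrix.mul_apply, Fin.sum_univ_three, Matrix.one_apply] <;> norm_num
  inv_val := by
    ext i j
    fin_cases i <;> fin_cases j <;>
      simp [gb, gB, Matrix.mul_apply, Fin.sum_univ_three, Matrix.one_apply] <;> norm_num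

def betaU : (Matrix (Fin 3) (Fin 3) 𝕜)ˣ where
  val := !![1,0,1; 0,1,0; 1,0,-1]
  inv := !![1/2,0,1/2; 0,1,0; 1/2,0,-(1/2)]
  val_inv := by
    ext i j
    fin_cases i <;> fin_cases j <;>
      simp [Matrix.mul_apply, Fin.sum_univ_three, Matrix.one_apply] <;> norm_num
  inv_val := by
    ext i j
    fin_cases i <;> fin_cases j <;>
      simp [Matrix.mul_apply, Fin.sum_univ_three, Matrix.one_apply] <;> norm_num

def f (lam : 𝕜) (hlam : 2 ≤ ‖lam‖) : Fin 2 → (Matrix (Fin 3) (Fin 3) 𝕜)ˣ :=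
  ![Aunit lam hlam, Bunit]

lemma gval (lam : 𝕜) (hlam : 2 ≤ ‖lam‖) (x : Fin 2 × Bool) :
    ((cond x.2 (f lam hlam x.1) (f lam hlam x.1)⁻¹ : (Matrix (Fin 3) (Fin 3) 𝕜)ˣ) :
      Matrix (Fin 3) (Fin 3) 𝕜) = g lam x := by
  obtain ⟨i, b⟩ := x
  fin_cases i <;> cases b <;> rfl

lemma prod_val (lam : 𝕜) (hlam : 2 ≤ ‖lam‖) (L : List (Fin 2 × Bool)) :
    ((FreeGroup.lift (f lam hlam) (FreeGroup.mk L) : (Matrix (Fin 3) (Fin 3) 𝕜)ˣ) :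
      Matrix (Fin 3) (Fin 3) 𝕜) = (L.map (g lam)).prod := by
  rw [FreeGroup.lift_mk]
  rw [show ((List.prod (L.map fun x => cond x.2 (f lam hlam x.1) (f lam hlam x.1)⁻¹) :
      (Matrix (Fin 3) (Fin 3) 𝕜)ˣ) : Matrix (Fin 3) (Fin 3) 𝕜)
    = (Units.coeHom _) (List.prod (L.map fun x => cond x.2 (f lam hlam x.1) (f lam hlam x.1)⁻¹))
    from rfl]
  rw [map_list_prod, List.map_map]
  congr 1
  exact List.map_congr_left fun x _ => gval lam hlam x

/-! ### The induction -/

lemma grow (lam : 𝕜) (hlam : 2 ≤ ‖lam‖) :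
    ∀ (L : List (Fin 2 × Bool)) (y : Fin 2 × Bool),
      (L ++ [y]).Chain' Rel → ∀ v : Fin 3 → 𝕜, cone y v →
      cone (L.headD y) ((L.map (g lam)).prod.mulVec v) ∧
      (3/2)^L.length * mx v ≤ mx ((L.map (g lam)).prod.mulVec v) := by
  intro L
  induction L with
  | nil =>
    intro y _ v hv
    simpa [Matrix.one_mulVec] using hv
  | cons x L ih =>
    intro y hch v hv
    have hhd : (L ++ [y]).head? = some (L.headD y) := by cases L <;> rfl
    simp only [List.cons_append, List.Chain', List.isChain_cons] at hch
    obtain ⟨hR, hch'⟩ := hch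
    obtain ⟨hc, hm⟩ := ih y hch' v hv
    have hs := step lam hlam x (L.headD y) (hR _ hhd) _ hc
    have hprod : ((x :: L).map (g lam)).prod.mulVec v
        = (g lam x).mulVec ((L.map (g lam)).prod.mulVec v) := by
      rw [List.map_cons, List.prod_cons, ← Matrix.mulVec_mulVec]
    constructor
    · rw [hprod]
      exact hs.1
    · rw [hprod]
      calc (3/2)^(x :: L).length * mx v = (3/2) * ((3/2)^L.length * mx v) := by
            rw [List.length_cons, pow_succ]; ring
        _ ≤ (3/2) * mx ((L.map (g lam)).prod.mulVec v) := by linarith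
        _ ≤ _ := hs.2

def seed : Fin 2 × Bool → (Fin 3 → 𝕜) := fun x =>
  if x.1 = 0 then (if x.2 then ![1,0,0] else ![0,0,1])
  else (if x.2 then ![1,0,1] else ![1,0,-1])

lemma seed_spec (y : Fin 2 × Bool) :
    cone y (seed (𝕜 := 𝕜) y) ∧ mx (seed (𝕜 := 𝕜) y) = 1 ∧
      eN (seed (𝕜 := 𝕜) y) ≤ Real.sqrt 2 := by
  have h2 : (1:ℝ) ≤ Real.sqrt 2 := by
    rw [show (1:ℝ) = Real.sqrt 1 from (Real.sqrt_one).symm]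
    exact Real.sqrt_le_sqrt (by norm_num)
  obtain ⟨i, b⟩ := y
  fin_cases i <;> cases b <;>
    refine ⟨⟨?_, ?_⟩, ?_, ?_⟩ <;>
    simp [cone, seed, mx, eN, Fin.sum_univ_three] <;>
    norm_num [h2]

lemma mx_le_eN (v : Fin 3 → 𝕜) : mx v ≤ eN v :=
  max_le (norm_le_eN v 0) (norm_le_eN v 2)

lemma grow_toWord (lam : 𝕜) (hlam : 2 ≤ ‖lam‖) (γ : FreeGroup (Fin 2)) :
    ∃ v : Fin 3 → 𝕜, mx v = 1 ∧ eN v ≤ Real.sqrt 2 ∧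
      (3/2)^(FreeGroup.norm γ) ≤
        mx (((FreeGroup.lift (f lam hlam) γ : (Matrix (Fin 3) (Fin 3) 𝕜)ˣ) :
          Matrix (Fin 3) (Fin 3) 𝕜).mulVec v) := by
  set L := γ.toWord with hLdef
  have hLred : FreeGroup.reduce L = L := FreeGroup.reduce_toWord γ
  have hch : L.Chain' Rel := chain'_of_reduce L hLred
  set y := L.getLastD (0, true) with hy
  have hch2 : (L ++ [y]).Chain' Rel := by
    simp only [List.Chain']; rw [List.isChain_append]
    refine ⟨hch, List.isChain_singleton _, ?_⟩
    intro p hp q hq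
    simp only [List.head?_cons, Option.mem_def, Option.some.injEq] at hq
    subst hq
    have hpy : y = p := by
      rw [hy, List.getLastD_eq_getLast?, hp]
      rfl
    subst hpy
    intro hcon
    exact (Bool.eq_not_self y.2).1 hcon.2
  obtain ⟨hcone, hmx1, _⟩ := seed_spec (𝕜 := 𝕜) y
  obtain ⟨_, hgrow⟩ := grow lam hlam L y hch2 (seed y) hcone
  refine ⟨seed y, hmx1, (seed_spec y).2.2, ?_⟩
  have hval : ((FreeGroup.lift (f lam hlam) γ : (Matrix (Fin 3) (Fin 3) 𝕜)ˣ) :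
      Matrix (Fin 3) (Fin 3) 𝕜) = (L.map (g lam)).prod := by
    conv_lhs => rw [← FreeGroup.mk_toWord (x := γ)]
    exact prod_val lam hlam L
  rw [hval]
  have hnorm : FreeGroup.norm γ = L.length := rfl
  rw [hnorm]
  calc (3/2:ℝ)^L.length = (3/2)^L.length * mx (seed (𝕜 := 𝕜) y) := by rw [hmx1, mul_one]
    _ ≤ _ := hgrow

lemma opN_bound (lam : 𝕜) (hlam : 2 ≤ ‖lam‖) (γ : FreeGroup (Fin 2)) :
    (3/2)^(FreeGroup.norm γ) / Real.sqrt 2 ≤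
      opN ((FreeGroup.lift (f lam hlam) γ : (Matrix (Fin 3) (Fin 3) 𝕜)ˣ) :
        Matrix (Fin 3) (Fin 3) 𝕜) := by
  obtain ⟨v, hmx1, hle, hgrow⟩ := grow_toWord lam hlam γ
  set P := ((FreeGroup.lift (f lam hlam) γ : (Matrix (Fin 3) (Fin 3) 𝕜)ˣ) :
    Matrix (Fin 3) (Fin 3) 𝕜)
  have h1 : (1:ℝ) ≤ eN v := by
    rw [← hmx1]; exact mx_le_eN v
  have hpos : (0:ℝ) < eN v := by linarith
  refine le_trans ?_ (ratio_le_opN P v hpos)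
  have h2 : (3/2:ℝ)^(FreeGroup.norm γ) ≤ eN (P.mulVec v) :=
    le_trans hgrow (mx_le_eN _)
  exact div_le_div₀ (eN_nonneg _) h2 (by positivity) hle

lemma lift_injective (lam : 𝕜) (hlam : 2 ≤ ‖lam‖) :
    Function.Injective (FreeGroup.lift (f lam hlam) :
      FreeGroup (Fin 2) →* (Matrix (Fin 3) (Fin 3) 𝕜)ˣ) := by
  rw [injective_iff_map_eq_one]
  intro γ hγ
  by_contra hne
  obtain ⟨v, hmx1, _, hgrow⟩ := grow_toWord lam hlam γ
  rw [hγ] at hgrow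
  simp only [Units.val_one, Matrix.one_mulVec, hmx1] at hgrow
  have hn : 1 ≤ FreeGroup.norm γ := by
    rcases Nat.eq_zero_or_pos (FreeGroup.norm γ) with h | h
    · exact absurd (FreeGroup.norm_eq_zero.1 h) hne
    · exact h
  have : (3/2:ℝ)^1 ≤ (3/2:ℝ)^(FreeGroup.norm γ) :=
    pow_le_pow_right₀ (by norm_num) hn
  simp at this
  linarith

end Stmt17


/-- for `k = ℝ` or `ℂ`, there exist `β ∈ GL_3(k)` and `r > 1` such that for
every `λ` with `|λ| ≥ 2` the representation of `F_2` sending the free basis to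
`diag(λ, λ, λ⁻²)` and `β·diag(10^r, 1, 10^{−r})·β⁻¹` is faithful and a quasi-isometric
embedding (its image contains the non-proximal matrix `diag(λ, λ, λ⁻²)`). -/
theorem stmt17 {𝕜 : Type*} [RCLike 𝕜] :
    ∃ (β : (Matrix (Fin 3) (Fin 3) 𝕜)ˣ) (r : ℝ), 1 < r ∧
      ∀ lam : 𝕜, 2 ≤ ‖lam‖ →
        ∃ ρ : FreeGroup (Fin 2) →* (Matrix (Fin 3) (Fin 3) 𝕜)ˣ,
          (ρ (FreeGroup.of 0) : Matrix (Fin 3) (Fin 3) 𝕜) =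
            Matrix.diagonal ![lam, lam, (lam ^ 2)⁻¹] ∧
          (ρ (FreeGroup.of 1) : Matrix (Fin 3) (Fin 3) 𝕜) =
            (β : Matrix (Fin 3) (Fin 3) 𝕜) *
              Matrix.diagonal ![(((10 : ℝ) ^ r : ℝ) : 𝕜), 1, (((10 : ℝ) ^ (-r) : ℝ) : 𝕜)] *
                ((β⁻¹ : _) : Matrix (Fin 3) (Fin 3) 𝕜) ∧
          Function.Injective ρ ∧
          ∃ c θ : ℝ, 0 < c ∧ 0 < θ ∧ ∀ γ : FreeGroup (Fin 2),
            c * Real.exp (θ * (FreeGroup.norm γ : ℝ)) ≤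
              opN (ρ γ : Matrix (Fin 3) (Fin 3) 𝕜) *
                opN (((ρ γ)⁻¹ : _) : Matrix (Fin 3) (Fin 3) 𝕜) := by
  refine ⟨Stmt17.betaU, 2, by norm_num, ?_⟩
  intro lam hlam
  refine ⟨FreeGroup.lift (Stmt17.f lam hlam), ?_, ?_, Stmt17.lift_injective lam hlam, ?_⟩
  · rw [FreeGroup.lift_apply_of]
    rfl
  · rw [FreeGroup.lift_apply_of]
    have h2 : ((10:ℝ)^(2:ℝ)) = 100 := by
      rw [show (2:ℝ) = ((2:ℕ):ℝ) by norm_num, Real.rpow_natCast]; norm_num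
    have hm2 : ((10:ℝ)^(-(2:ℝ))) = (100:ℝ)⁻¹ := by
      rw [Real.rpow_neg (by norm_num), h2]
    rw [h2, hm2]
    have hbv : ((Stmt17.betaU : (Matrix (Fin 3) (Fin 3) 𝕜)ˣ) : Matrix (Fin 3) (Fin 3) 𝕜)
        = !![1,0,1; 0,1,0; 1,0,-1] := rfl
    have hbi : ((Stmt17.betaU⁻¹ : (Matrix (Fin 3) (Fin 3) 𝕜)ˣ) : Matrix (Fin 3) (Fin 3) 𝕜)
        = !![1/2,0,1/2; 0,1,0; 1/2,0,-(1/2)] := rfl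
    rw [hbv, hbi]
    show Stmt17.gb = _
    ext i j
    fin_cases i <;> fin_cases j <;>
      simp [Stmt17.gb, Matrix.mul_apply, Fin.sum_univ_three, Matrix.diagonal,
        Matrix.vecHead, Matrix.vecTail,
        RCLike.ofReal_ofNat, RCLike.ofReal_inv, RCLike.ofReal_one] <;>
      norm_num
  · refine ⟨1/2, Real.log (9/4), by norm_num, Real.log_pos (by norm_num), ?_⟩
    intro γ
    have hb1 := Stmt17.opN_bound lam hlam γ
    have hb2 := Stmt17.opN_bound lam hlam γ⁻¹
    rw [FreeGroup.norm_inv_eq] at hb2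
    have hmap : ((FreeGroup.lift (Stmt17.f lam hlam) γ)⁻¹ : (Matrix (Fin 3) (Fin 3) 𝕜)ˣ)
        = FreeGroup.lift (Stmt17.f lam hlam) γ⁻¹ := (map_inv _ γ).symm
    rw [hmap]
    set n := FreeGroup.norm γ with hn
    have hexp : Real.exp (Real.log (9/4) * (n:ℝ)) = (9/4:ℝ)^n := by
      rw [mul_comm, Real.exp_nat_mul, Real.exp_log (by norm_num)]
    rw [hexp]
    have hp : (0:ℝ) ≤ (3/2:ℝ)^n / Real.sqrt 2 := by positivity
    have hmul := mul_le_mul hb1 hb2 hp (le_trans hp hb1)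
    calc 1/2 * (9/4:ℝ)^n = ((3/2:ℝ)^n / Real.sqrt 2) * ((3/2:ℝ)^n / Real.sqrt 2) := by
          rw [div_mul_div_comm, ← mul_pow, Real.mul_self_sqrt (by norm_num)]
          norm_num
          ring
      _ ≤ _ := hmul
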